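/- Degenerate five-axes theorem: let A₁,…,A₅ be points in the affine plane with A₅ on the line ⟨A₁,A₄⟩ but no other three collinear, and assume lᵢ = ⟨A_{i−1},A_{i+1}⟩ is not parallel to l_{i+1} = ⟨Aᵢ,A_{i+2}⟩ for all i mod 5. Then the five axes g₁,…,g₅ (with g₅ defined by the tangential construction at A₅) lie in a pencil. -/

import Mathlib

open Classical in
noncomputable def ratio {k : Type*} [Field k] (X Y Z W : k × k) : k :=
  if h : ∃ r : k, X - Y = r • (Z - W) then h.choose else 0

def InPencil {k : Type*} [Field k] {ι : Type*} (g : ι → AffineSubspace k (k × k)) : Prop :=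
  (∃ p, ∀ i, p ∈ g i) ∨ (∀ i j, (g i).Parallel (g j))

section helpers
variable {k : Type*} [Field k]

lemma ratio_eq' {X Y Z W : k × k} {r : k} (hZW : Z - W ≠ 0) (h : X - Y = r • (Z - W)) :
    ratio X Y Z W = r := by
  have hex : ∃ r' : k, X - Y = r' • (Z - W) := ⟨r, h⟩
  rw [ratio, dif_pos hex]
  have h2 := hex.choose_spec
  have h3 : (hex.choose - r) • (Z - W) = 0 := by
    rw [sub_smul, ← h2, h, sub_self]
  rcases smul_eq_zero.1 h3 with h4 | h4
  · exact sub_eq_zero.1 h4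
  · exact absurd h4 hZW

lemma eq_of_ratio {X Y Z W : k × k} {r : k} (hr : r ≠ 0) (h : ratio X Y Z W = r) :
    X - Y = r • (Z - W) := by
  rw [ratio] at h
  split_ifs at h with hex
  · rw [← h]; exact hex.choose_spec
  · exact absurd h.symm hr

lemma pcross_dep {p1 q1 p2 q2 : k} (h0 : ¬(p1 = 0 ∧ q1 = 0)) (h : p1 * q2 - p2 * q1 = 0) :
    ∃ c, p2 = c * p1 ∧ q2 = c * q1 := by
  by_cases hp : p1 = 0
  · have hq : q1 ≠ 0 := fun hq => h0 ⟨hp, hq⟩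
    have hp2 : p2 = 0 := by
      have : p2 * q1 = 0 := by rw [hp] at h; linear_combination -h
      rcases mul_eq_zero.1 this with h' | h'
      · exact h'
      · exact absurd h' hq
    exact ⟨q2 / q1, by rw [hp2, hp, mul_zero], by field_simp⟩
  · refine ⟨p2 / p1, by field_simp, ?_⟩
    rw [div_mul_eq_mul_div, eq_div_iff hp]
    linear_combination h

lemma collinear_of_param {p q r u : k × k} (c d : k) (hq : q = c • u + p) (hr : r = d • u + p) :
    Collinear k ({p, q, r} : Set (k × k)) := by
  rw [collinear_iff_of_mem (Set.mem_insert p _)]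
  refine ⟨u, ?_⟩
  rintro x hx
  rcases hx with rfl | rfl | rfl
  · exact ⟨0, by simp⟩
  · exact ⟨c, by simpa using hq⟩
  · exact ⟨d, by simpa using hr⟩

lemma mem_line_param {p q x : k × k} (h : x ∈ line[k, p, q]) :
    ∃ r : k, x = r • (q - p) + p := by
  rw [← vsub_vadd x p] at h
  obtain ⟨r, hr⟩ := vadd_left_mem_affineSpan_pair.1 h
  simp only [vsub_eq_sub] at hr
  exact ⟨r, eq_add_of_sub_eq hr.symm⟩

lemma param_mem_line {p q x : k × k} (r : k) (h : x = r • (q - p) + p) :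
    x ∈ line[k, p, q] := by
  have h2 := smul_vsub_vadd_mem_affineSpan_pair r p q
  simp only [vsub_eq_sub, vadd_eq_add] at h2
  rwa [← h] at h2

lemma line_parallel {p q p' q' : k × k} (c : k) (hc : c ≠ 0) (h : q' - p' = c • (q - p)) :
    AffineSubspace.Parallel line[k, p, q] line[k, p', q'] := by
  rw [AffineSubspace.affineSpan_pair_parallel_iff_vectorSpan_eq, vectorSpan_pair,
    vectorSpan_pair]
  simp only [vsub_eq_sub]
  have h2 : p' - q' = c • (p - q) := by
    have h3 : p' - q' = -(q' - p') := by abel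
    rw [h3, h]; module
  rw [h2, Submodule.span_singleton_smul_eq (IsUnit.mk0 c hc)]

lemma set_ne_of_elem {α : Type*} {x : α} {S T : Set α} (hx : x ∈ S) (hnx : x ∉ T) : S ≠ T :=
  fun h => hnx (h ▸ hx)

lemma point_comb {k : Type*} [Field k] (v w p : k × k) {c α β γ δ ε ζ : k}
    (h1 : ε - γ = c * (α - γ)) (h2 : ζ - δ = c * (β - δ)) :
    ε • v + ζ • w + p = c • ((α • v + β • w + p) - (γ • v + δ • w + p)) + (γ • v + δ • w + p) := by
  have e1 : ε = c * (α - γ) + γ := by linear_combination h1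
  have e2 : ζ = c * (β - δ) + δ := by linear_combination h2
  rw [e1, e2]; module

lemma point_comb1 {k : Type*} [Field k] (v w p : k × k) {c α β ε ζ : k}
    (h1 : ε = c * α) (h2 : ζ = c * β) :
    ε • v + ζ • w + p = c • ((α • v + β • w + p) - p) + p := by
  rw [h1, h2]; module

lemma cramer (u v' w' : k × k) :
    (v'.1 * w'.2 - v'.2 * w'.1) • u
      = (u.1 * w'.2 - u.2 * w'.1) • v' + (v'.1 * u.2 - v'.2 * u.1) • w' := by
  refine Prod.ext ?_ ?_ <;> simp [Prod.smul_def, smul_eq_mul] <;> ring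

end helpers

set_option maxHeartbeats 4000000 in
theorem stmt11 {k : Type*} [Field k]
    (A B C' : ZMod 5 → k × k) (l g : ZMod 5 → AffineSubspace k (k × k)) (Bpt : k × k)
    (hl : ∀ i, l i = affineSpan k ({A (i - 1), A (i + 1)} : Set (k × k)))
    (hdeg : Collinear k ({A 1, A 4, A 0} : Set (k × k)))
    (hncol : ∀ i j m : ZMod 5, i ≠ j → j ≠ m → i ≠ m →
      ({i, j, m} : Set (ZMod 5)) ≠ ({0, 1, 4} : Set (ZMod 5)) →
      ¬ Collinear k ({A i, A j, A m} : Set (k × k)))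
    (hnp : ∀ i, ¬ (l i).Parallel (l (i + 1)))
    (hB : ∀ i, B i ∈ l i ∧ B i ∈ l (i + 1))
    (hC : ∀ i, i ≠ 0 → C' i ∈ l i ∧
      ratio (C' i) (B (i - 1)) (C' i) (B i) = ratio (B (i - 1)) (A (i + 1)) (B i) (A (i - 1)))
    (hg : ∀ i, i ≠ 0 → g i = affineSpan k ({A i, C' i} : Set (k × k)))
    (hBpt1 : ∃ s : k, Bpt = A 4 + s • (A 2 - A 0))
    (hBpt2 : ∃ t : k, Bpt = A 1 + t • (A 3 - A 0))
    (hg0 : g 0 = affineSpan k ({A 0, Bpt} : Set (k × k))) :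
    InPencil g := by
  classical
  -- normalize index arithmetic
  have hl0 : l 0 = line[k, A 4, A 1] := by
    have h := hl 0
    rwa [show (0 : ZMod 5) - 1 = 4 from by decide, show (0 : ZMod 5) + 1 = 1 from by decide] at h
  have hl1 : l 1 = line[k, A 0, A 2] := by
    have h := hl 1
    rwa [show (1 : ZMod 5) - 1 = 0 from by decide, show (1 : ZMod 5) + 1 = 2 from by decide] at h
  have hl2 : l 2 = line[k, A 1, A 3] := by
    have h := hl 2
    rwa [show (2 : ZMod 5) - 1 = 1 from by decide, show (2 : ZMod 5) + 1 = 3 from by decide] at h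
  have hl3 : l 3 = line[k, A 2, A 4] := by
    have h := hl 3
    rwa [show (3 : ZMod 5) - 1 = 2 from by decide, show (3 : ZMod 5) + 1 = 4 from by decide] at h
  have hl4 : l 4 = line[k, A 3, A 0] := by
    have h := hl 4
    rwa [show (4 : ZMod 5) - 1 = 3 from by decide, show (4 : ZMod 5) + 1 = 0 from by decide] at h
  -- basis vectors
  obtain ⟨v, hv⟩ : ∃ v : k × k, v = A 2 - A 1 := ⟨_, rfl⟩
  obtain ⟨w, hw⟩ : ∃ w : k × k, w = A 3 - A 1 := ⟨_, rfl⟩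
  have hA2c : A 2 = (1 : k) • v + (0 : k) • w + A 1 := by rw [hv]; module
  have hA3c : A 3 = (0 : k) • v + (1 : k) • w + A 1 := by rw [hw]; module
  -- A 2 ≠ A 1
  have hA21 : A 2 ≠ A 1 := by
    intro h
    refine hncol 1 2 3 (by decide) (by decide) (by decide)
      (set_ne_of_elem (show (2 : ZMod 5) ∈ _ from by simp)
        (by simp only [Set.mem_insert_iff, Set.mem_singleton_iff]; decide)) ?_
    exact collinear_of_param (u := A 3 - A 1) 0 1 (by rw [h]; module) (by module)
  -- independence of v, w
  have hcvw : v.1 * w.2 - v.2 * w.1 ≠ 0 := by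
    intro h0
    have hv0 : ¬(v.1 = 0 ∧ v.2 = 0) := by
      rintro ⟨h1, h2⟩
      exact hA21 (by
        have : v = 0 := Prod.ext h1 h2
        rw [this] at hv; exact sub_eq_zero.1 hv.symm)
    obtain ⟨c, hc1, hc2⟩ := pcross_dep (p1 := v.1) (q1 := v.2) (p2 := w.1) (q2 := w.2) hv0 (by linear_combination h0)
    have hwc : w = c • v := Prod.ext (by simpa using hc1) (by simpa using hc2)
    refine hncol 1 2 3 (by decide) (by decide) (by decide)
      (set_ne_of_elem (show (2 : ZMod 5) ∈ _ from by simp)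
        (by simp only [Set.mem_insert_iff, Set.mem_singleton_iff]; decide)) ?_
    exact collinear_of_param (u := v) 1 c (by rw [hv]; module)
      (by rw [show A 3 = w + A 1 from by rw [hw]; module, hwc])
  have hvw : ∀ α β : k, α • v + β • w = 0 → α = 0 ∧ β = 0 := by
    intro α β h
    have h1 : α * v.1 + β * w.1 = 0 := by
      have := congrArg Prod.fst h
      simpa using this
    have h2 : α * v.2 + β * w.2 = 0 := by
      have := congrArg Prod.snd h
      simpa using this
    constructor
    · have : α * (v.1 * w.2 - v.2 * w.1) = 0 := by linear_combination w.2 * h1 - w.1 * h2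
      rcases mul_eq_zero.1 this with h' | h'
      · exact h'
      · exact absurd h' hcvw
    · have : β * (v.1 * w.2 - v.2 * w.1) = 0 := by linear_combination -v.2 * h1 + v.1 * h2
      rcases mul_eq_zero.1 this with h' | h'
      · exact h'
      · exact absurd h' hcvw
  have inj : ∀ α β γ δ : k, α • v + β • w + A 1 = γ • v + δ • w + A 1 → α = γ ∧ β = δ := by
    intro α β γ δ h
    have h2 : (α - γ) • v + (β - δ) • w = 0 := by linear_combination (norm := module) h
    obtain ⟨h3, h4⟩ := hvw _ _ h2
    exact ⟨sub_eq_zero.1 h3, sub_eq_zero.1 h4⟩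
  have nzvw : ∀ α β : k, ¬(α = 0 ∧ β = 0) → α • v + β • w ≠ 0 := fun α β h h0 => h (hvw α β h0)
  -- coordinates of A 4
  obtain ⟨a, b, hab⟩ : ∃ a b : k, A 4 = a • v + b • w + A 1 := by
    obtain ⟨d, hd⟩ : ∃ d : k, d = v.1 * w.2 - v.2 * w.1 := ⟨_, rfl⟩
    have hdne : d ≠ 0 := by rw [hd]; exact hcvw
    refine ⟨((A 4 - A 1).1 * w.2 - (A 4 - A 1).2 * w.1) / d,
      (v.1 * (A 4 - A 1).2 - v.2 * (A 4 - A 1).1) / d, ?_⟩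
    have h := cramer (A 4 - A 1) v w
    rw [← hd] at h
    have key : (((A 4 - A 1).1 * w.2 - (A 4 - A 1).2 * w.1) / d) • v
        + ((v.1 * (A 4 - A 1).2 - v.2 * (A 4 - A 1).1) / d) • w = A 4 - A 1 :=
      calc (((A 4 - A 1).1 * w.2 - (A 4 - A 1).2 * w.1) / d) • v
            + ((v.1 * (A 4 - A 1).2 - v.2 * (A 4 - A 1).1) / d) • w
          = d⁻¹ • (((A 4 - A 1).1 * w.2 - (A 4 - A 1).2 * w.1) • v
            + (v.1 * (A 4 - A 1).2 - v.2 * (A 4 - A 1).1) • w) := by module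
        _ = d⁻¹ • (d • (A 4 - A 1)) := by rw [← h]
        _ = A 4 - A 1 := inv_smul_smul₀ hdne _
    rw [key]
    abel
  -- the degeneracy parameter L
  obtain ⟨L, hL⟩ : ∃ L : k, A 0 = L • (A 4 - A 1) + A 1 := by
    rw [collinear_iff_of_mem (Set.mem_insert (A 1) _)] at hdeg
    obtain ⟨u, hu⟩ := hdeg
    obtain ⟨r4, hr4⟩ := hu (A 4) (by simp)
    obtain ⟨r0, hr0⟩ := hu (A 0) (by simp)
    rw [vadd_eq_add] at hr4 hr0
    have hA41 : A 4 ≠ A 1 := by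
      intro h
      refine hncol 1 2 4 (by decide) (by decide) (by decide)
        (set_ne_of_elem (show (2 : ZMod 5) ∈ _ from by simp)
          (by simp only [Set.mem_insert_iff, Set.mem_singleton_iff]; decide)) ?_
      exact collinear_of_param (u := A 2 - A 1) 1 0 (by module) (by rw [h]; module)
    have hr4ne : r4 ≠ 0 := by
      intro h
      rw [h, zero_smul, zero_add] at hr4
      exact hA41 hr4
    refine ⟨r0 / r4, ?_⟩
    have h44 : A 4 - A 1 = r4 • u := by rw [hr4]; module
    rw [h44, smul_smul, div_mul_cancel₀ _ hr4ne, ← hr0]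
  have hA0c : A 0 = (L * a) • v + (L * b) • w + A 1 := by rw [hL, hab]; module
  have hA4c : A 4 = a • v + b • w + A 1 := hab
  -- collinearity engine
  have colaux : ∀ (p q r : k × k) (α β γ δ : k), q = α • v + β • w + p →
      r = γ • v + δ • w + p → α * δ - γ * β = 0 → Collinear k {p, q, r} := by
    intro p q r α β γ δ hq hr hcr
    by_cases h0 : α = 0 ∧ β = 0
    · exact collinear_of_param (u := γ • v + δ • w) 0 1
        (by rw [hq, h0.1, h0.2]; module) (by rw [hr]; module)
    · obtain ⟨c, hc1, hc2⟩ := pcross_dep (p1 := α) (q1 := β) (p2 := γ) (q2 := δ) h0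
        (by linear_combination hcr)
      exact collinear_of_param (u := α • v + β • w) 1 c (by rw [hq]; module)
        (by rw [hr, hc1, hc2]; module)
  -- parallelism engine
  have paraux : ∀ (p q p' q' : k × k) (α β γ δ : k), q - p = α • v + β • w →
      q' - p' = γ • v + δ • w → α * δ - γ * β = 0 → ¬(α = 0 ∧ β = 0) → ¬(γ = 0 ∧ δ = 0) →
      AffineSubspace.Parallel line[k, p, q] line[k, p', q'] := by
    intro p q p' q' α β γ δ h1 h2 hcr hn1 hn2
    obtain ⟨c, hc1, hc2⟩ := pcross_dep (p1 := α) (q1 := β) (p2 := γ) (q2 := δ) hn1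
      (by linear_combination hcr)
    have hcne : c ≠ 0 := by
      intro h
      exact hn2 ⟨by rw [hc1, h, zero_mul], by rw [hc2, h, zero_mul]⟩
    refine line_parallel c hcne ?_
    rw [h1, h2, hc1, hc2]; module
  -- nondegeneracy facts
  have setne' : ∀ T : Set (ZMod 5), (2 : ZMod 5) ∈ T → T ≠ ({0, 1, 4} : Set (ZMod 5)) :=
    fun T h => set_ne_of_elem h
      (by simp only [Set.mem_insert_iff, Set.mem_singleton_iff]; decide)
  have setne3 : ∀ T : Set (ZMod 5), (3 : ZMod 5) ∈ T → T ≠ ({0, 1, 4} : Set (ZMod 5)) :=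
    fun T h => set_ne_of_elem h
      (by simp only [Set.mem_insert_iff, Set.mem_singleton_iff]; decide)
  have ha : a ≠ 0 := by
    intro h0
    refine hncol 1 3 4 (by decide) (by decide) (by decide) (setne3 _ (by simp)) ?_
    exact colaux _ _ _ 0 1 a b hA3c hA4c (by linear_combination -h0)
  have hb : b ≠ 0 := by
    intro h0
    refine hncol 1 2 4 (by decide) (by decide) (by decide) (setne' _ (by simp)) ?_
    exact colaux _ _ _ 1 0 a b hA2c hA4c (by linear_combination h0)
  have hA1c0 : A 1 = (-(L * a)) • v + (-(L * b)) • w + A 0 := by rw [hA0c]; module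
  have hA2c0 : A 2 = (1 - L * a) • v + (-(L * b)) • w + A 0 := by rw [hA2c, hA0c]; module
  have hA3c0 : A 3 = (-(L * a)) • v + (1 - L * b) • w + A 0 := by rw [hA3c, hA0c]; module
  have hA4c0 : A 4 = (a - L * a) • v + (b - L * b) • w + A 0 := by rw [hA4c, hA0c]; module
  have hL0 : L ≠ 0 := by
    intro h0
    refine hncol 0 1 2 (by decide) (by decide) (by decide) (setne' _ (by simp)) ?_
    exact colaux _ _ _ (-(L * a)) (-(L * b)) (1 - L * a) (-(L * b)) hA1c0 hA2c0
      (by linear_combination b * h0)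
  have hL1 : L - 1 ≠ 0 := by
    intro h0
    refine hncol 0 4 2 (by decide) (by decide) (by decide) (setne' _ (by simp)) ?_
    exact colaux _ _ _ (a - L * a) (b - L * b) (1 - L * a) (-(L * b)) hA4c0 hA2c0
      (by linear_combination b * h0)
  have hDB : 1 - a * L - b * L ≠ 0 := by
    intro h0
    refine hncol 0 2 3 (by decide) (by decide) (by decide) (setne' _ (by simp)) ?_
    exact colaux _ _ _ (1 - L * a) (-(L * b)) (-(L * a)) (1 - L * b) hA2c0 hA3c0
      (by linear_combination h0)
  have h1ab : 1 - a - b ≠ 0 := by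
    intro h0
    refine hncol 2 3 4 (by decide) (by decide) (by decide) (setne' _ (by simp)) ?_
    refine colaux _ _ _ (-1) 1 (a - 1) b (by rw [hA3c, hA2c]; module)
      (by rw [hA4c, hA2c]; module) (by linear_combination h0)
  have h1aL : 1 - a * L ≠ 0 := by
    intro h0
    apply hnp 1
    rw [show (1 : ZMod 5) + 1 = 2 from by decide, hl1, hl2]
    refine paraux _ _ _ _ (1 - L * a) (-(L * b)) 0 1
      (by rw [hA2c, hA0c]; module) (by rw [hA3c]; module)
      (by linear_combination h0) ?_ ?_
    · rintro ⟨-, h2⟩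
      rcases mul_eq_zero.1 (neg_eq_zero.1 h2) with h' | h'
      · exact hL0 h'
      · exact hb h'
    · rintro ⟨-, h2⟩; exact one_ne_zero h2
  have h1a : 1 - a ≠ 0 := by
    intro h0
    apply hnp 2
    rw [show (2 : ZMod 5) + 1 = 3 from by decide, hl2, hl3]
    refine paraux _ _ _ _ 0 1 (a - 1) b
      (by rw [hA3c]; module) (by rw [hA4c, hA2c]; module)
      (by linear_combination h0) ?_ ?_
    · rintro ⟨-, h2⟩; exact one_ne_zero h2
    · rintro ⟨-, h2⟩; exact hb h2
  have h13 : 1 - a - b * L ≠ 0 := by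
    intro h0
    apply hnp 3
    rw [show (3 : ZMod 5) + 1 = 4 from by decide, hl3, hl4]
    refine paraux _ _ _ _ (a - 1) b (L * a) (L * b - 1)
      (by rw [hA4c, hA2c]; module) (by rw [hA0c, hA3c]; module)
      (by linear_combination h0) ?_ ?_
    · rintro ⟨-, h2⟩; exact hb h2
    · rintro ⟨h2, -⟩
      rcases mul_eq_zero.1 h2 with h' | h'
      · exact hL0 h'
      · exact ha h'
  -- extract line parameters of the B points
  obtain ⟨s0, hs0⟩ : ∃ r : k, B 0 = r • (A 1 - A 4) + A 4 :=
    mem_line_param (by rw [← hl0]; exact (hB 0).1)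
  obtain ⟨t0, ht0⟩ : ∃ r : k, B 0 = r • (A 2 - A 0) + A 0 :=
    mem_line_param (by
      have h := (hB 0).2
      rwa [show (0 : ZMod 5) + 1 = 1 from by decide, hl1] at h)
  obtain ⟨s1, hs1⟩ : ∃ r : k, B 1 = r • (A 2 - A 0) + A 0 :=
    mem_line_param (by rw [← hl1]; exact (hB 1).1)
  obtain ⟨t1, ht1⟩ : ∃ r : k, B 1 = r • (A 3 - A 1) + A 1 :=
    mem_line_param (by
      have h := (hB 1).2
      rwa [show (1 : ZMod 5) + 1 = 2 from by decide, hl2] at h)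
  obtain ⟨s2, hs2⟩ : ∃ r : k, B 2 = r • (A 3 - A 1) + A 1 :=
    mem_line_param (by rw [← hl2]; exact (hB 2).1)
  obtain ⟨t2, ht2⟩ : ∃ r : k, B 2 = r • (A 4 - A 2) + A 2 :=
    mem_line_param (by
      have h := (hB 2).2
      rwa [show (2 : ZMod 5) + 1 = 3 from by decide, hl3] at h)
  obtain ⟨s3, hs3⟩ : ∃ r : k, B 3 = r • (A 4 - A 2) + A 2 :=
    mem_line_param (by rw [← hl3]; exact (hB 3).1)
  obtain ⟨t3, ht3⟩ : ∃ r : k, B 3 = r • (A 0 - A 3) + A 3 :=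
    mem_line_param (by
      have h := (hB 3).2
      rwa [show (3 : ZMod 5) + 1 = 4 from by decide, hl4] at h)
  obtain ⟨s4, hs4⟩ : ∃ r : k, B 4 = r • (A 0 - A 3) + A 3 :=
    mem_line_param (by rw [← hl4]; exact (hB 4).1)
  obtain ⟨t4, ht4⟩ : ∃ r : k, B 4 = r • (A 1 - A 4) + A 4 :=
    mem_line_param (by
      have h := (hB 4).2
      rwa [show (4 : ZMod 5) + 1 = 0 from by decide, hl0] at h)
  -- solve for the parameters
  obtain ⟨E01, E02⟩ := inj _ _ _ _ ((show s0 • (A 1 - A 4) + A 4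
      = (s0 * (-a) + a) • v + (s0 * (-b) + b) • w + A 1 from by
        rw [hA4c]; module).symm.trans ((hs0.symm.trans ht0).trans
      (show t0 • (A 2 - A 0) + A 0
      = (t0 * (1 - L * a) + L * a) • v + (t0 * (-(L * b)) + L * b) • w + A 1 from by
        rw [hA2c, hA0c]; module)))
  have t0v : t0 = 0 := by
    have h' : t0 * b = 0 := by linear_combination a * E02 - b * E01
    rcases mul_eq_zero.1 h' with h'' | h''
    · exact h''
    · exact absurd h'' hb
  obtain ⟨E11, E12⟩ := inj _ _ _ _ ((show s1 • (A 2 - A 0) + A 0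
      = (s1 * (1 - L * a) + L * a) • v + (s1 * (-(L * b)) + L * b) • w + A 1 from by
        rw [hA2c, hA0c]; module).symm.trans ((hs1.symm.trans ht1).trans
      (show t1 • (A 3 - A 1) + A 1
      = (t1 * 0 + 0) • v + (t1 * 1 + 0) • w + A 1 from by
        rw [hA3c]; module)))
  have s1v : s1 * (1 - a * L) = -(a * L) := by linear_combination E11
  have t1v : t1 * (1 - a * L) = b * L := by
    linear_combination (-(L * b)) * E11 - (1 - a * L) * E12
  obtain ⟨E21, E22⟩ := inj _ _ _ _ ((show s2 • (A 3 - A 1) + A 1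
      = (s2 * 0 + 0) • v + (s2 * 1 + 0) • w + A 1 from by
        rw [hA3c]; module).symm.trans ((hs2.symm.trans ht2).trans
      (show t2 • (A 4 - A 2) + A 2
      = (t2 * (a - 1) + 1) • v + (t2 * b + 0) • w + A 1 from by
        rw [hA4c, hA2c]; module)))
  have t2v : t2 * (1 - a) = 1 := by linear_combination E21
  have s2v : s2 * (1 - a) = b := by linear_combination b * E21 + (1 - a) * E22
  obtain ⟨E31, E32⟩ := inj _ _ _ _ ((show s3 • (A 4 - A 2) + A 2
      = (s3 * (a - 1) + 1) • v + (s3 * b + 0) • w + A 1 from by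
        rw [hA4c, hA2c]; module).symm.trans ((hs3.symm.trans ht3).trans
      (show t3 • (A 0 - A 3) + A 3
      = (t3 * (L * a) + 0) • v + (t3 * (L * b - 1) + 1) • w + A 1 from by
        rw [hA0c, hA3c]; module)))
  have s3v : s3 * (1 - a - b * L) = 1 - a * L - b * L := by
    linear_combination (L * b - 1) * E31 - L * a * E32
  have t3v : t3 * (1 - a - b * L) = 1 - a - b := by
    linear_combination b * E31 - (a - 1) * E32
  obtain ⟨E41, E42⟩ := inj _ _ _ _ ((show s4 • (A 0 - A 3) + A 3
      = (s4 * (L * a) + 0) • v + (s4 * (L * b - 1) + 1) • w + A 1 from by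
        rw [hA0c, hA3c]; module).symm.trans ((hs4.symm.trans ht4).trans
      (show t4 • (A 1 - A 4) + A 4
      = (t4 * (-a) + a) • v + (t4 * (-b) + b) • w + A 1 from by
        rw [hA4c]; module)))
  have s4v : s4 = 1 := by
    have h' : a * (s4 - 1) = 0 := by linear_combination b * E41 - a * E42
    rcases mul_eq_zero.1 h' with h'' | h''
    · exact absurd h'' ha
    · exact sub_eq_zero.1 h''
  -- the point Bpt
  obtain ⟨sB, hsB⟩ := hBpt1
  obtain ⟨tB, htB⟩ := hBpt2
  obtain ⟨F1, F2⟩ := inj _ _ _ _ ((show A 4 + sB • (A 2 - A 0)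
      = (sB * (1 - L * a) + a) • v + (sB * (-(L * b)) + b) • w + A 1 from by
        rw [hA4c, hA2c, hA0c]; module).symm.trans ((hsB.symm.trans htB).trans
      (show A 1 + tB • (A 3 - A 0)
      = (tB * (-(L * a)) + 0) • v + (tB * (1 - L * b) + 0) • w + A 1 from by
        rw [hA3c, hA0c]; module)))
  have sBv : sB * (1 - a * L - b * L) = -a := by
    linear_combination (1 - L * b) * F1 + L * a * F2
  -- nonvanishing of the s-parameters
  have hs1ne : s1 ≠ 0 := by
    intro h
    exact (mul_ne_zero ha hL0) (by rw [h, zero_mul] at s1v; linear_combination s1v)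
  have hs2ne : s2 ≠ 0 := by
    intro h
    exact hb (by rw [h, zero_mul] at s2v; linear_combination -s2v)
  have hs3ne : s3 ≠ 0 := by
    intro h
    exact hDB (by rw [h, zero_mul] at s3v; linear_combination -s3v)
  have hs4ne : s4 ≠ 0 := by rw [s4v]; exact one_ne_zero
  -- t-parameters are ≠ 1
  have ht0m1 : t0 - 1 ≠ 0 := by rw [t0v]; norm_num
  have ht1m1 : t1 - 1 ≠ 0 := by
    intro h
    exact hDB (by linear_combination t1v - (1 - a * L) * h)
  have ht2m1 : t2 - 1 ≠ 0 := by
    intro h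
    exact ha (by linear_combination (1 - a) * h - t2v)
  have ht3m1 : t3 - 1 ≠ 0 := by
    intro h
    exact (mul_ne_zero hb hL1) (by linear_combination (1 - a - b * L) * h - t3v)
  -- line directions are nonzero
  have hD1ne : A 2 - A 0 ≠ 0 := by
    rw [show A 2 - A 0 = (1 - L * a) • v + (-(L * b)) • w from by rw [hA2c, hA0c]; module]
    exact nzvw _ _ (fun hp => h1aL (by linear_combination hp.1))
  have hD2ne : A 3 - A 1 ≠ 0 := by
    rw [show A 3 - A 1 = (0 : k) • v + (1 : k) • w from by rw [hA3c]; module]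
    exact nzvw _ _ (fun hp => one_ne_zero hp.2)
  have hD3ne : A 4 - A 2 ≠ 0 := by
    rw [show A 4 - A 2 = (a - 1) • v + b • w from by rw [hA4c, hA2c]; module]
    exact nzvw _ _ (fun hp => hb hp.2)
  have hD4ne : A 0 - A 3 ≠ 0 := by
    rw [show A 0 - A 3 = (L * a) • v + (L * b - 1) • w from by rw [hA0c, hA3c]; module]
    exact nzvw _ _ (fun hp => (mul_ne_zero hL0 ha) hp.1)
  have hBA1ne : B 1 - A 0 ≠ 0 := by
    rw [show B 1 - A 0 = s1 • (A 2 - A 0) from by rw [hs1]; module]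
    exact smul_ne_zero hs1ne hD1ne
  have hBA2ne : B 2 - A 1 ≠ 0 := by
    rw [show B 2 - A 1 = s2 • (A 3 - A 1) from by rw [hs2]; module]
    exact smul_ne_zero hs2ne hD2ne
  have hBA3ne : B 3 - A 2 ≠ 0 := by
    rw [show B 3 - A 2 = s3 • (A 4 - A 2) from by rw [hs3]; module]
    exact smul_ne_zero hs3ne hD3ne
  have hBA4ne : B 4 - A 3 ≠ 0 := by
    rw [show B 4 - A 3 = s4 • (A 0 - A 3) from by rw [hs4]; module]
    exact smul_ne_zero hs4ne hD4ne
  -- extract the C' points: i = 1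
  obtain ⟨r1, hr1k⟩ : ∃ r : k, r * s1 = t0 - 1 := ⟨(t0 - 1) / s1, div_mul_cancel₀ _ hs1ne⟩
  have hr1ne : r1 ≠ 0 := by
    intro h; rw [h, zero_mul] at hr1k; exact ht0m1 hr1k.symm
  have hrat1 : ratio (B 0) (A 2) (B 1) (A 0) = r1 := by
    apply ratio_eq' hBA1ne
    rw [show B 0 - A 2 = (t0 - 1) • (A 2 - A 0) from by rw [ht0]; module,
      show B 1 - A 0 = s1 • (A 2 - A 0) from by rw [hs1]; module, smul_smul, hr1k]
  have hCeq1 : C' 1 - B 0 = r1 • (C' 1 - B 1) := by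
    apply eq_of_ratio hr1ne
    have h := (hC 1 (by decide)).2
    rwa [show (1 : ZMod 5) - 1 = 0 from by decide, show (1 : ZMod 5) + 1 = 2 from by decide,
      hrat1] at h
  obtain ⟨u1, hu1⟩ : ∃ r : k, C' 1 = r • (A 2 - A 0) + A 0 :=
    mem_line_param (by rw [← hl1]; exact (hC 1 (by decide)).1)
  have rel1 : u1 * (s1 - t0 + 1) = s1 := by
    rw [hu1, ht0, hs1] at hCeq1
    have h2 : (u1 - t0 - r1 * (u1 - s1)) • (A 2 - A 0) = 0 := by
      linear_combination (norm := module) hCeq1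
    rcases smul_eq_zero.1 h2 with h3 | h3
    · linear_combination s1 * h3 + (u1 - s1) * hr1k
    · exact absurd h3 hD1ne
  rw [t0v] at rel1
  have u1v : u1 * (1 - 2 * a * L) = -(a * L) := by
    linear_combination (1 - a * L) * rel1 + (1 - u1) * s1v
  have hQ1ne : 1 - 2 * a * L ≠ 0 := by
    intro h
    exact (mul_ne_zero ha hL0) (by linear_combination u1v - u1 * h)
  -- i = 2
  obtain ⟨r2, hr2k⟩ : ∃ r : k, r * s2 = t1 - 1 := ⟨(t1 - 1) / s2, div_mul_cancel₀ _ hs2ne⟩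
  have hr2ne : r2 ≠ 0 := by
    intro h; rw [h, zero_mul] at hr2k; exact ht1m1 hr2k.symm
  have hrat2 : ratio (B 1) (A 3) (B 2) (A 1) = r2 := by
    apply ratio_eq' hBA2ne
    rw [show B 1 - A 3 = (t1 - 1) • (A 3 - A 1) from by rw [ht1]; module,
      show B 2 - A 1 = s2 • (A 3 - A 1) from by rw [hs2]; module, smul_smul, hr2k]
  have hCeq2 : C' 2 - B 1 = r2 • (C' 2 - B 2) := by
    apply eq_of_ratio hr2ne
    have h := (hC 2 (by decide)).2
    rwa [show (2 : ZMod 5) - 1 = 1 from by decide, show (2 : ZMod 5) + 1 = 3 from by decide,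
      hrat2] at h
  obtain ⟨u2, hu2⟩ : ∃ r : k, C' 2 = r • (A 3 - A 1) + A 1 :=
    mem_line_param (by rw [← hl2]; exact (hC 2 (by decide)).1)
  have rel2 : u2 * (s2 - t1 + 1) = s2 := by
    rw [hu2, ht1, hs2] at hCeq2
    have h2 : (u2 - t1 - r2 * (u2 - s2)) • (A 3 - A 1) = 0 := by
      linear_combination (norm := module) hCeq2
    rcases smul_eq_zero.1 h2 with h3 | h3
    · linear_combination s2 * h3 + (u2 - s2) * hr2k
    · exact absurd h3 hD2ne
  have u2v : u2 * (1 + b - b * L - a - a * L + a * a * L) = b * (1 - a * L) := by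
    linear_combination (1 - a) * (1 - a * L) * rel2 + (1 - a * L) * (1 - u2) * s2v
      + (1 - a) * u2 * t1v
  have hQ2ne : 1 + b - b * L - a - a * L + a * a * L ≠ 0 := by
    intro h
    exact (mul_ne_zero hb h1aL) (by linear_combination u2 * h - u2v)
  -- i = 3
  obtain ⟨r3, hr3k⟩ : ∃ r : k, r * s3 = t2 - 1 := ⟨(t2 - 1) / s3, div_mul_cancel₀ _ hs3ne⟩
  have hr3ne : r3 ≠ 0 := by
    intro h; rw [h, zero_mul] at hr3k; exact ht2m1 hr3k.symm
  have hrat3 : ratio (B 2) (A 4) (B 3) (A 2) = r3 := by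
    apply ratio_eq' hBA3ne
    rw [show B 2 - A 4 = (t2 - 1) • (A 4 - A 2) from by rw [ht2]; module,
      show B 3 - A 2 = s3 • (A 4 - A 2) from by rw [hs3]; module, smul_smul, hr3k]
  have hCeq3 : C' 3 - B 2 = r3 • (C' 3 - B 3) := by
    apply eq_of_ratio hr3ne
    have h := (hC 3 (by decide)).2
    rwa [show (3 : ZMod 5) - 1 = 2 from by decide, show (3 : ZMod 5) + 1 = 4 from by decide,
      hrat3] at h
  obtain ⟨u3, hu3⟩ : ∃ r : k, C' 3 = r • (A 4 - A 2) + A 2 :=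
    mem_line_param (by rw [← hl3]; exact (hC 3 (by decide)).1)
  have rel3 : u3 * (s3 - t2 + 1) = s3 := by
    rw [hu3, ht2, hs3] at hCeq3
    have h2 : (u3 - t2 - r3 * (u3 - s3)) • (A 4 - A 2) = 0 := by
      linear_combination (norm := module) hCeq3
    rcases smul_eq_zero.1 h2 with h3 | h3
    · linear_combination s3 * h3 + (u3 - s3) * hr3k
    · exact absurd h3 hD3ne
  have u3v : u3 * (1 - b * L - 2 * a - a * L + 2 * a * b * L + a * a + a * a * L)
      = (1 - a * L - b * L) * (1 - a) := by
    linear_combination (1 - a - b * L) * (1 - a) * rel3 + (1 - a) * (1 - u3) * s3v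
      + u3 * (1 - a - b * L) * t2v
  have hQ3ne : 1 - b * L - 2 * a - a * L + 2 * a * b * L + a * a + a * a * L ≠ 0 := by
    intro h
    exact (mul_ne_zero hDB h1a) (by linear_combination u3 * h - u3v)
  -- i = 4
  obtain ⟨r4', hr4k⟩ : ∃ r : k, r * s4 = t3 - 1 := ⟨(t3 - 1) / s4, div_mul_cancel₀ _ hs4ne⟩
  have hr4ne' : r4' ≠ 0 := by
    intro h; rw [h, zero_mul] at hr4k; exact ht3m1 hr4k.symm
  have hrat4 : ratio (B 3) (A 0) (B 4) (A 3) = r4' := by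
    apply ratio_eq' hBA4ne
    rw [show B 3 - A 0 = (t3 - 1) • (A 0 - A 3) from by rw [ht3]; module,
      show B 4 - A 3 = s4 • (A 0 - A 3) from by rw [hs4]; module, smul_smul, hr4k]
  have hCeq4 : C' 4 - B 3 = r4' • (C' 4 - B 4) := by
    apply eq_of_ratio hr4ne'
    have h := (hC 4 (by decide)).2
    rwa [show (4 : ZMod 5) - 1 = 3 from by decide, show (4 : ZMod 5) + 1 = 0 from by decide,
      hrat4] at h
  obtain ⟨u4, hu4⟩ : ∃ r : k, C' 4 = r • (A 0 - A 3) + A 3 :=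
    mem_line_param (by rw [← hl4]; exact (hC 4 (by decide)).1)
  have rel4 : u4 * (s4 - t3 + 1) = s4 := by
    rw [hu4, ht3, hs4] at hCeq4
    have h2 : (u4 - t3 - r4' * (u4 - s4)) • (A 0 - A 3) = 0 := by
      linear_combination (norm := module) hCeq4
    rcases smul_eq_zero.1 h2 with h3 | h3
    · linear_combination s4 * h3 + (u4 - s4) * hr4k
    · exact absurd h3 hD4ne
  rw [s4v] at rel4
  have u4v : u4 * (1 - a + b - 2 * b * L) = 1 - a - b * L := by
    linear_combination (1 - a - b * L) * rel4 + u4 * t3v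
  have hQ4ne : 1 - a + b - 2 * b * L ≠ 0 := by
    intro h
    exact h13 (by linear_combination u4 * h - u4v)
  -- division forms of the parameters
  have u1e : u1 = -(a * L) / (1 - 2 * a * L) := by
    rw [eq_div_iff hQ1ne]; linear_combination u1v
  have u2e : u2 = b * (1 - a * L) / (1 + b - b * L - a - a * L + a * a * L) := by
    rw [eq_div_iff hQ2ne]; linear_combination u2v
  have u3e : u3 = (1 - a * L - b * L) * (1 - a)
      / (1 - b * L - 2 * a - a * L + 2 * a * b * L + a * a + a * a * L) := by
    rw [eq_div_iff hQ3ne]; linear_combination u3v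
  have u4e : u4 = (1 - a - b * L) / (1 - a + b - 2 * b * L) := by
    rw [eq_div_iff hQ4ne]; linear_combination u4v
  have sBe : sB = -a / (1 - a * L - b * L) := by
    rw [eq_div_iff hDB]; linear_combination sBv
  -- coordinate forms of the C' points and Bpt
  have hC1c : C' 1 = (u1 * (1 - L * a) + L * a) • v + (u1 * (-(L * b)) + L * b) • w + A 1 := by
    rw [hu1, hA2c, hA0c]; module
  have hC2c : C' 2 = (u2 * 0 + 0) • v + (u2 * 1 + 0) • w + A 1 := by
    rw [hu2, hA3c]; module
  have hC3c : C' 3 = (u3 * (a - 1) + 1) • v + (u3 * b + 0) • w + A 1 := by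
    rw [hu3, hA4c, hA2c]; module
  have hC4c : C' 4 = (u4 * (L * a) + 0) • v + (u4 * (L * b - 1) + 1) • w + A 1 := by
    rw [hu4, hA0c, hA3c]; module
  have hBptc : Bpt = (sB * (1 - L * a) + a) • v + (sB * (-(L * b)) + b) • w + A 1 := by
    rw [hsB, hA4c, hA2c, hA0c]; module
  -- direction vectors of the axes
  have hd1 : C' 1 - A 1 = (u1 * (1 - L * a) + L * a) • v + (u1 * (-(L * b)) + L * b) • w := by
    rw [hC1c]; module
  have hd2 : C' 2 - A 2 = (-1 : k) • v + u2 • w := by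
    rw [hC2c, hA2c]; module
  have hd3 : C' 3 - A 3 = (u3 * (a - 1) + 1) • v + (u3 * b - 1) • w := by
    rw [hC3c, hA3c]; module
  have hd4 : C' 4 - A 4 = (u4 * (L * a) - a) • v + (u4 * (L * b - 1) + 1 - b) • w := by
    rw [hC4c, hA4c]; module
  have hd0 : Bpt - A 0 = (sB * (1 - L * a) + a - L * a) • v
      + (sB * (-(L * b)) + b - L * b) • w := by
    rw [hBptc, hA0c]; module
  -- the direction coordinate pairs are nonzero
  have N1 : ¬(u1 * (1 - L * a) + L * a = 0 ∧ u1 * (-(L * b)) + L * b = 0) := by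
    rintro ⟨h1, -⟩
    exact (mul_ne_zero (mul_ne_zero ha hL0) (mul_ne_zero ha hL0))
      (by linear_combination (1 - L * a) * u1v - (1 - 2 * a * L) * h1)
  have N2 : ¬((-1 : k) = 0 ∧ u2 = 0) := by
    rintro ⟨h1, -⟩
    exact one_ne_zero (α := k) (by linear_combination -h1)
  have N3 : ¬(u3 * (a - 1) + 1 = 0 ∧ u3 * b - 1 = 0) := by
    rintro ⟨h1, h2⟩
    have h5 : u3 * (1 - a - b) = 0 := by linear_combination -h1 - h2
    rcases mul_eq_zero.1 h5 with h' | h'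
    · rw [h', zero_mul] at h2
      exact one_ne_zero (α := k) (by linear_combination -h2)
    · exact h1ab h'
  have N4 : ¬(u4 * (L * a) - a = 0 ∧ u4 * (L * b - 1) + 1 - b = 0) := by
    rintro ⟨h1, h2⟩
    have k1 : a * (u4 * L - 1) = 0 := by linear_combination h1
    rcases mul_eq_zero.1 k1 with h' | h'
    · exact ha h'
    · exact hL1 (by linear_combination L * h2 - (L * b - 1) * h')
  have h1L : (1 : k) - L ≠ 0 := fun h => hL1 (by linear_combination -h)
  have N0 : ¬(sB * (1 - L * a) + a - L * a = 0 ∧ sB * (-(L * b)) + b - L * b = 0) := by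
    rintro ⟨h1, h2⟩
    exact (mul_ne_zero hb h1L) (by linear_combination b * L * h1 + (1 - L * a) * h2)
  have dec5 : ∀ j : ZMod 5, j = 0 ∨ j = 1 ∨ j = 2 ∨ j = 3 ∨ j = 4 := by decide
  by_cases hQ : a + a * L + b * L - b - 1 = 0
  · -- parallel case
    right
    have key0 : ((u1 * (1 - L * a) + L * a) * (sB * (-(L * b)) + b - L * b)
          - (sB * (1 - L * a) + a - L * a) * (u1 * (-(L * b)) + L * b))
        * ((1 - 2 * a * L) * (1 - a * L - b * L))
        = (-(a*b*L*L)) * (a + a * L + b * L - b - 1) := by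
      linear_combination (b - b*L - b*b*L + b*b*L*L - a*b*L + a*b*L*L) * u1v
        + (-(b*L) + 2*a*b*L*L) * sBv
    have cz0 : (u1 * (1 - L * a) + L * a) * (sB * (-(L * b)) + b - L * b)
        - (sB * (1 - L * a) + a - L * a) * (u1 * (-(L * b)) + L * b) = 0 := by
      rcases mul_eq_zero.1 (key0.trans (by rw [hQ, mul_zero])) with h | h
      · exact h
      · exact absurd h (mul_ne_zero hQ1ne hDB)
    have key2 : ((u1 * (1 - L * a) + L * a) * u2
          - (-1) * (u1 * (-(L * b)) + L * b))
        * ((1 - 2 * a * L) * (1 + b - b * L - a - a * L + a * a * L))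
        = (-(b*L) + a*b*L*L) * (a + a * L + b * L - b - 1) := by
      linear_combination (u2 + b*u2 - b*L - b*L*u2 - b*b*L + b*b*L*L - a*u2 - 2*a*L*u2
          + a*b*L - a*b*L*u2 + a*b*L*L + a*b*L*L*u2 + 2*a*a*L*u2 + a*a*L*L*u2
          - a*a*b*L*L - a*a*a*L*L*u2) * u1v + (-(a*a*L*L)) * u2v
    have cz2 : (u1 * (1 - L * a) + L * a) * u2
        - (-1) * (u1 * (-(L * b)) + L * b) = 0 := by
      rcases mul_eq_zero.1 (key2.trans (by rw [hQ, mul_zero])) with h | h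
      · exact h
      · exact absurd h (mul_ne_zero hQ1ne hQ2ne)
    have key3 : ((u1 * (1 - L * a) + L * a) * (u3 * b - 1)
          - (u3 * (a - 1) + 1) * (u1 * (-(L * b)) + L * b))
        * ((1 - 2 * a * L) * (1 - b * L - 2 * a - a * L + 2 * a * b * L + a * a + a * a * L))
        = (-(a*a*L*L) + a*a*b*L*L + a*a*a*L*L) * (a + a * L + b * L - b - 1) := by
      linear_combination (-1 + b*u3 + 2*b*L - b*L*u3 - b*b*L*u3 - b*b*L*L + b*b*L*L*u3
          + 2*a + 2*a*L - 2*a*b*u3 - 4*a*b*L + a*b*L*u3 - 2*a*b*L*L + a*b*L*L*u3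
          + 2*a*b*b*L*u3 + 2*a*b*b*L*L - 2*a*b*b*L*L*u3 - a*a - 3*a*a*L - a*a*L*L
          + a*a*b*u3 + a*a*b*L + 3*a*a*b*L*L - a*a*b*L*L*u3 + a*a*a*L + a*a*a*L*L) * u1v
        + (b*L - a*b*L - a*b*L*L) * u3v
    have cz3 : (u1 * (1 - L * a) + L * a) * (u3 * b - 1)
        - (u3 * (a - 1) + 1) * (u1 * (-(L * b)) + L * b) = 0 := by
      rcases mul_eq_zero.1 (key3.trans (by rw [hQ, mul_zero])) with h | h
      · exact h
      · exact absurd h (mul_ne_zero hQ1ne hQ3ne)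
    have key4 : ((u1 * (1 - L * a) + L * a) * (u4 * (L * b - 1) + 1 - b)
          - (u4 * (L * a) - a) * (u1 * (-(L * b)) + L * b))
        * ((1 - 2 * a * L) * (1 - a + b - 2 * b * L))
        = (-(a*b*L) + a*b*L*L) * (a + a * L + b * L - b - 1) := by
      linear_combination (1 - u4 - b*u4 - 2*b*L + 3*b*L*u4 - b*b + 2*b*b*L + b*b*L*u4
          - 2*b*b*L*L*u4 - a + a*u4 - a*L + a*L*u4 + a*b - a*b*L + 2*a*b*L*L
          - 2*a*b*L*L*u4 + a*a*L - a*a*L*u4) * u1v + (-(a*b*L*L) + a*a*L*L) * u4v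
    have cz4 : (u1 * (1 - L * a) + L * a) * (u4 * (L * b - 1) + 1 - b)
        - (u4 * (L * a) - a) * (u1 * (-(L * b)) + L * b) = 0 := by
      rcases mul_eq_zero.1 (key4.trans (by rw [hQ, mul_zero])) with h | h
      · exact h
      · exact absurd h (mul_ne_zero hQ1ne hQ4ne)
    have p0 : (g 1).Parallel (g 0) := by
      rw [hg 1 (by decide), hg0]
      exact paraux _ _ _ _ _ _ _ _ hd1 hd0 cz0 N1 N0
    have p2 : (g 1).Parallel (g 2) := by
      rw [hg 1 (by decide), hg 2 (by decide)]
      exact paraux _ _ _ _ _ _ _ _ hd1 hd2 cz2 N1 N2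
    have p3 : (g 1).Parallel (g 3) := by
      rw [hg 1 (by decide), hg 3 (by decide)]
      exact paraux _ _ _ _ _ _ _ _ hd1 hd3 cz3 N1 N3
    have p4 : (g 1).Parallel (g 4) := by
      rw [hg 1 (by decide), hg 4 (by decide)]
      exact paraux _ _ _ _ _ _ _ _ hd1 hd4 cz4 N1 N4
    have hpar : ∀ i, (g 1).Parallel (g i) := by
      intro i
      rcases dec5 i with rfl | rfl | rfl | rfl | rfl
      · exact p0
      · exact AffineSubspace.Parallel.refl _
      · exact p2
      · exact p3
      · exact p4
    exact fun i j => (hpar i).symm.trans (hpar j)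
  · -- common point case
    left
    refine ⟨(a * a * L / (a + a * L + b * L - b - 1)) • v
      + ((a * b * L - b) / (a + a * L + b * L - b - 1)) • w + A 1, ?_⟩
    intro i
    rcases dec5 i with rfl | rfl | rfl | rfl | rfl
    · rw [hg0]
      obtain ⟨c, hc1, hc2⟩ := pcross_dep
        (p1 := sB * (1 - L * a) + a - L * a) (q1 := sB * (-(L * b)) + b - L * b)
        (p2 := a * a * L / (a + a * L + b * L - b - 1) - L * a)
        (q2 := (a * b * L - b) / (a + a * L + b * L - b - 1) - L * b)
        N0 (by rw [sBe]; have n1 : a * (1 + L) + L * b - b - 1 ≠ 0 := fun h => hQ (by linear_combination h); have n2 : a * (1 + L) + b * L - b - 1 ≠ 0 := fun h => hQ (by linear_combination h); have n3 : 1 - a * L - L * b ≠ 0 := fun h => hDB (by linear_combination h); field_simp; ring)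
      apply param_mem_line c
      rw [hBptc, hA0c]
      exact point_comb v w (A 1) (by linear_combination hc1) (by linear_combination hc2)
    · rw [hg 1 (by decide)]
      obtain ⟨c, hc1, hc2⟩ := pcross_dep
        (p1 := u1 * (1 - L * a) + L * a) (q1 := u1 * (-(L * b)) + L * b)
        (p2 := a * a * L / (a + a * L + b * L - b - 1))
        (q2 := (a * b * L - b) / (a + a * L + b * L - b - 1))
        N1 (by rw [u1e]; have n1 : a * (1 + L) + L * b - b - 1 ≠ 0 := fun h => hQ (by linear_combination h); have n2 : a * (1 + L) + b * L - b - 1 ≠ 0 := fun h => hQ (by linear_combination h); have n3 : 1 - a * L * 2 ≠ 0 := fun h => hQ1ne (by linear_combination h); field_simp; ring)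
      apply param_mem_line c
      rw [hC1c]
      exact point_comb1 v w (A 1) (by linear_combination hc1) (by linear_combination hc2)
    · rw [hg 2 (by decide)]
      obtain ⟨c, hc1, hc2⟩ := pcross_dep
        (p1 := (-1 : k)) (q1 := u2)
        (p2 := a * a * L / (a + a * L + b * L - b - 1) - 1)
        (q2 := (a * b * L - b) / (a + a * L + b * L - b - 1) - 0)
        N2 (by rw [u2e]; have n1 : a * (1 + L) + L * b - b - 1 ≠ 0 := fun h => hQ (by linear_combination h); have n2 : a * (1 + L) + b * L - b - 1 ≠ 0 := fun h => hQ (by linear_combination h); have n3 : 1 + b - b * L - a - a * L + a ^ 2 * L ≠ 0 := fun h => hQ2ne (by linear_combination h); field_simp; ring)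
      apply param_mem_line c
      rw [hC2c, hA2c]
      exact point_comb v w (A 1) (by linear_combination hc1) (by linear_combination hc2)
    · rw [hg 3 (by decide)]
      obtain ⟨c, hc1, hc2⟩ := pcross_dep
        (p1 := u3 * (a - 1) + 1) (q1 := u3 * b - 1)
        (p2 := a * a * L / (a + a * L + b * L - b - 1) - 0)
        (q2 := (a * b * L - b) / (a + a * L + b * L - b - 1) - 1)
        N3 (by rw [u3e]; have n1 : a * (1 + L) + L * b - b - 1 ≠ 0 := fun h => hQ (by linear_combination h); have n2 : a * (1 + L) + b * L - b - 1 ≠ 0 := fun h => hQ (by linear_combination h); have n3 : 1 - L * b - a * 2 - a * L + a * L * b * 2 + a ^ 2 + a ^ 2 * L ≠ 0 := fun h => hQ3ne (by linear_combination h); field_simp; ring)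
      apply param_mem_line c
      rw [hC3c, hA3c]
      exact point_comb v w (A 1) (by linear_combination hc1) (by linear_combination hc2)
    · rw [hg 4 (by decide)]
      obtain ⟨c, hc1, hc2⟩ := pcross_dep
        (p1 := u4 * (L * a) - a) (q1 := u4 * (L * b - 1) + 1 - b)
        (p2 := a * a * L / (a + a * L + b * L - b - 1) - a)
        (q2 := (a * b * L - b) / (a + a * L + b * L - b - 1) - b)
        N4 (by rw [u4e]; have n1 : a * (1 + L) + L * b - b - 1 ≠ 0 := fun h => hQ (by linear_combination h); have n2 : a * (1 + L) + b * L - b - 1 ≠ 0 := fun h => hQ (by linear_combination h); have n3 : 1 - a + b - b * L * 2 ≠ 0 := fun h => hQ4ne (by linear_combination h); field_simp; ring)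
      apply param_mem_line c
      rw [hC4c, hA4c]
      exact point_comb v w (A 1) (by linear_combination hc1) (by linear_combination hc2)
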